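/- arXiv:1608.06181 — 4 statements merged into one kernel-verified Lean document; each statement's English description precedes it below -/
import Mathlib

section
/- Let α > 0 and m a nonnegative integer. There is a constant C > 0 such that for every holomorphic function g on the unit disk D with sup_{z∈D}(1-|z|²)^{α+m-1}|g(z)| = M < ∞, and for all z, w ∈ D, one has |(1-|z|²)^{α+m-1} g(z) - (1-|w|²)^{α+m-1} g(w)| ≤ C · M · ρ(z,w), where ρ(z,w) = |(z-w)/(1-w̄z)| is the pseudo-hyperbolic distance. -/
noncomputable section
open Complex

lemma aux_rpow_le {c u x : ℝ} (hc : 1 ≤ c) (h1 : 1/c ≤ u) (h2 : u ≤ c) :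
    u ^ x ≤ c ^ |x| := by
  have hc0 : (0:ℝ) < c := lt_of_lt_of_le one_pos hc
  have hu : (0:ℝ) < u := lt_of_lt_of_le (by positivity) h1
  rw [Real.rpow_def_of_pos hu, Real.rpow_def_of_pos hc0]
  apply Real.exp_le_exp.2
  have hlog : |Real.log u| ≤ Real.log c := by
    rw [abs_le]
    constructor
    · have h := Real.log_le_log (by positivity) h1
      rwa [Real.log_div one_ne_zero (ne_of_gt hc0), Real.log_one, zero_sub] at h
    · exact Real.log_le_log hu h2
  calc Real.log u * x ≤ |Real.log u * x| := le_abs_self _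
    _ = |Real.log u| * |x| := abs_mul _ _
    _ ≤ Real.log c * |x| := mul_le_mul_of_nonneg_right hlog (abs_nonneg x)

lemma aux_rpow_sub_one {x t : ℝ} (h1 : 1/2 ≤ t) (h2 : t ≤ 2) :
    |t ^ x - 1| ≤ (|x| * 2 ^ (|x| + 1)) * |t - 1| := by
  have key := Convex.norm_image_sub_le_of_norm_hasDerivWithin_le
    (f := fun u : ℝ => u ^ x) (f' := fun u : ℝ => x * u ^ (x - 1))
    (s := Set.Icc (1/2 : ℝ) 2) (C := |x| * 2 ^ (|x| + 1)) (x := 1) (y := t)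
    (fun u hu => (Real.hasDerivAt_rpow_const (Or.inl (by nlinarith [hu.1]))).hasDerivWithinAt)
    (fun u hu => by
      have hu0 : (0:ℝ) < u := by nlinarith [hu.1]
      have hb : u ^ (x - 1) ≤ 2 ^ |x - 1| := aux_rpow_le one_le_two hu.1 hu.2
      have hb2 : (2:ℝ) ^ |x - 1| ≤ 2 ^ (|x| + 1) := by
        apply Real.rpow_le_rpow_of_exponent_le one_le_two
        calc |x - 1| ≤ |x| + |(1:ℝ)| := abs_sub x 1
          _ = |x| + 1 := by norm_num
      rw [Real.norm_eq_abs, abs_mul]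
      rw [_root_.abs_of_nonneg (Real.rpow_nonneg hu0.le _)]
      exact mul_le_mul (le_refl _) (hb.trans hb2) (Real.rpow_nonneg hu0.le _) (abs_nonneg x))
    (convex_Icc _ _) (Set.mem_Icc.2 ⟨by norm_num, by norm_num⟩) (Set.mem_Icc.2 ⟨h1, h2⟩)
  simpa [Real.norm_eq_abs, Real.one_rpow] using key

set_option maxHeartbeats 1000000 in
/-- Lipschitz-type estimate in the pseudo-hyperbolic distance for functions with
finite weighted sup norm sup (1-|z|²)^{α+m-1}|g(z)|. -/
theorem stmt2 (m : ℕ) (α : ℝ) (hα : 0 < α) :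
    ∃ C > (0:ℝ), ∀ g : ℂ → ℂ, DifferentiableOn ℂ g (Metric.ball (0:ℂ) 1) →
      ∀ M : ℝ,
      (∀ z ∈ Metric.ball (0:ℂ) 1,
          (1 - ‖z‖ ^ 2) ^ (α + m - 1) * ‖g z‖ ≤ M) →
      ∀ z ∈ Metric.ball (0:ℂ) 1, ∀ w ∈ Metric.ball (0:ℂ) 1,
        ‖(((1 - ‖z‖ ^ 2) ^ (α + m - 1) : ℝ) : ℂ) * g z -
            (((1 - ‖w‖ ^ 2) ^ (α + m - 1) : ℝ) : ℂ) * g w‖ ≤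
          C * M * ‖(z - w) / (1 - (starRingEnd ℂ) w * z)‖ := by
  set e : ℝ := α + m - 1 with he
  set K : ℝ := |e| * 2 ^ (|e| + 1) with hK
  clear_value e K
  have hK0 : 0 ≤ K := by rw [hK]; positivity
  have h2e : (0:ℝ) < 2 ^ |e| := Real.rpow_pos_of_pos (by norm_num) _
  have h4e : (0:ℝ) < 4 ^ |e| := Real.rpow_pos_of_pos (by norm_num) _
  refine ⟨33 + 4 * K * 2 ^ |e| + 24 * 4 ^ |e|, by linarith [mul_nonneg hK0 h2e.le, h4e], ?_⟩
  intro g hg M hM z hz w hw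
  have hz1 : ‖z‖ < 1 := by simpa [Complex.dist_eq] using hz
  have hw1 : ‖w‖ < 1 := by simpa [Complex.dist_eq] using hw
  set A : ℝ := 1 - ‖z‖ ^ 2 with hA
  set B : ℝ := 1 - ‖w‖ ^ 2 with hB
  clear_value A B
  have hA0 : 0 < A := by
    rw [hA]
    have := mul_pos (show (0:ℝ) < 1 - ‖z‖ by linarith)
      (show (0:ℝ) < 1 + ‖z‖ by linarith [norm_nonneg z])
    linarith [this]
  have hB0 : 0 < B := by
    rw [hB]
    have := mul_pos (show (0:ℝ) < 1 - ‖w‖ by linarith)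
      (show (0:ℝ) < 1 + ‖w‖ by linarith [norm_nonneg w])
    linarith [this]
  have hAe0 : 0 < A ^ e := Real.rpow_pos_of_pos hA0 e
  have hBe0 : 0 < B ^ e := Real.rpow_pos_of_pos hB0 e
  have hMz : A ^ e * ‖(g z)‖ ≤ M := by
    have h := hM z hz; rwa [← hA] at h
  have hMw : B ^ e * ‖(g w)‖ ≤ M := by
    have h := hM w hw; rwa [← hB] at h
  have hM0 : 0 ≤ M := le_trans (mul_nonneg hAe0.le (norm_nonneg _)) hMz
  set R : ℝ := ‖((z - w) / (1 - (starRingEnd ℂ) w * z))‖ with hRdef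
  clear_value R
  have hR0 : 0 ≤ R := by rw [hRdef]; exact norm_nonneg _
  rcases eq_or_lt_of_le hM0 with hMeq | hM1
  · -- M = 0
    have hgz : g z = 0 := by
      have h := hMz
      rw [← hMeq] at h
      have hx := mul_nonneg hAe0.le (norm_nonneg (g z))
      have h0 : A ^ e * ‖(g z)‖ = 0 := le_antisymm h hx
      have habs : ‖(g z)‖ = 0 := by
        rcases mul_eq_zero.1 h0 with h' | h'
        · exact absurd h' hAe0.ne'
        · exact h'
      exact norm_eq_zero.1 habs
    have hgw : g w = 0 := by
      have h := hMw
      rw [← hMeq] at h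
      have hx := mul_nonneg hBe0.le (norm_nonneg (g w))
      have h0 : B ^ e * ‖(g w)‖ = 0 := le_antisymm h hx
      have habs : ‖(g w)‖ = 0 := by
        rcases mul_eq_zero.1 h0 with h' | h'
        · exact absurd h' hBe0.ne'
        · exact h'
      exact norm_eq_zero.1 habs
    have h0 : ((A ^ e : ℝ) : ℂ) * g z - ((B ^ e : ℝ) : ℂ) * g w = 0 := by
      rw [hgz, hgw]; ring
    rw [h0, norm_zero, ← hMeq, mul_zero, zero_mul]
  -- main case M > 0
  set D : ℝ := ‖(1 - (starRingEnd ℂ) w * z)‖ with hDdef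
  clear_value D
  have hD0 : 0 < D := by
    rw [hDdef]
    have h1 : ‖((starRingEnd ℂ) w * z)‖ < 1 := by
      rw [norm_mul, Complex.norm_conj]
      have h1 : ‖w‖ * ‖z‖ ≤ 1 * ‖z‖ :=
        mul_le_mul_of_nonneg_right hw1.le (norm_nonneg z)
      linarith [hz1]
    have hne : (1 : ℂ) - (starRingEnd ℂ) w * z ≠ 0 := by
      intro h
      rw [sub_eq_zero] at h
      rw [← h] at h1
      simp at h1
    exact norm_pos_iff.mpr hne
  have hRD : R = ‖(z - w)‖ / D := by rw [hRdef, norm_div, hDdef]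
  have hzwR : ‖(z - w)‖ = R * D := by rw [hRD]; field_simp
  by_cases hcase : R ≤ 1/16
  · -- small pseudo-hyperbolic distance
    have hkey : (1:ℂ) - (starRingEnd ℂ) w * z
        = ((B : ℝ) : ℂ) + (starRingEnd ℂ) w * (w - z) := by
      have h1 : ((starRingEnd ℂ) w) * w = ((‖w‖ ^ 2 : ℝ) : ℂ) := by
        rw [mul_comm, Complex.mul_conj]
        norm_cast
        exact (Complex.sq_norm w).symm
      rw [hB]
      push_cast
      push_cast at h1
      linear_combination -h1
    have hD_le : D ≤ B + ‖(z - w)‖ := by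
      rw [hDdef, hkey]
      calc ‖(((B:ℝ):ℂ) + (starRingEnd ℂ) w * (w - z))‖
          ≤ ‖((B:ℝ):ℂ)‖ + ‖((starRingEnd ℂ) w * (w - z))‖ :=
            norm_add_le _ _
        _ = B + ‖w‖ * ‖(w - z)‖ := by
            rw [norm_mul, Complex.norm_conj, Complex.norm_real, Real.norm_eq_abs, _root_.abs_of_nonneg hB0.le]
        _ ≤ B + ‖(z - w)‖ := by
            rw [norm_sub_rev w z]
            have h1 : ‖w‖ * ‖(z - w)‖ ≤ 1 * ‖(z - w)‖ :=
              mul_le_mul_of_nonneg_right hw1.le (norm_nonneg (z - w))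
            linarith
    have hDB : D ≤ 2 * B := by
      have hp := mul_nonneg (show (0:ℝ) ≤ 1/16 - R by linarith) hD0.le
      linarith [hD_le, hzwR, hp]
    have hzwB : ‖(z - w)‖ ≤ 2 * R * B := by
      rw [hzwR]
      have hp := mul_nonneg hR0 (show (0:ℝ) ≤ 2 * B - D by linarith)
      linarith [hp]
    have hd0 : 0 < 1 - ‖w‖ := by linarith
    have hB2d : B ≤ 2 * (1 - ‖w‖) := by
      rw [hB]; linarith [sq_nonneg (1 - ‖w‖)]
    have hzwd : ‖(z - w)‖ ≤ (1 - ‖w‖)/4 := by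
      linarith [hzwB, hB2d, mul_nonneg (show (0:ℝ) ≤ 1/16 - R by linarith) hB0.le]
    -- ratio t
    set t : ℝ := A / B with ht
    clear_value t
    have ht0 : 0 < t := by rw [ht]; exact div_pos hA0 hB0
    have habs_sub : |‖w‖ - ‖z‖| ≤ ‖(z - w)‖ := by
      have h := abs_norm_sub_norm_le w z
      rw [norm_sub_rev w z] at h
      exact h
    have hABdiff : |A - B| ≤ 2 * ‖(z - w)‖ := by
      have hfac : A - B = (‖w‖ - ‖z‖) * (‖w‖ + ‖z‖) := by
        rw [hA, hB]; ring
      rw [hfac, abs_mul,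
        _root_.abs_of_nonneg (add_nonneg (norm_nonneg w) (norm_nonneg z))]
      calc |‖w‖ - ‖z‖| * (‖w‖ + ‖z‖)
          ≤ ‖(z - w)‖ * (‖w‖ + ‖z‖) :=
            mul_le_mul_of_nonneg_right habs_sub
              (add_nonneg (norm_nonneg w) (norm_nonneg z))
        _ ≤ ‖(z - w)‖ * 2 :=
            mul_le_mul_of_nonneg_left (by linarith) (norm_nonneg (z - w))
        _ = 2 * ‖(z - w)‖ := mul_comm _ _
    have hABR : |A - B| ≤ 4 * R * B := by linarith [hABdiff, hzwB]
    have hABq : |A - B| ≤ B/4 := by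
      linarith [hABR, mul_nonneg (show (0:ℝ) ≤ 1/16 - R by linarith) hB0.le]
    have hABq' := abs_le.1 hABq
    have ht_lo : 1/2 ≤ t := by rw [ht, le_div_iff₀ hB0]; linarith [hABq'.1]
    have ht_hi : t ≤ 2 := by rw [ht, div_le_iff₀ hB0]; linarith [hABq'.2]
    have htm1 : |t - 1| ≤ 4 * R := by
      rw [ht, div_sub_one hB0.ne', abs_div, _root_.abs_of_nonneg hB0.le, div_le_iff₀ hB0]
      linarith [hABR]
    have hA_eq : A = t * B := by rw [ht]; field_simp
    have hAeBe : A ^ e = t ^ e * B ^ e := by rw [hA_eq, Real.mul_rpow ht0.le hB0.le]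
    have hte0 : 0 < t ^ e := Real.rpow_pos_of_pos ht0 e
    have hBeAe : B ^ e = t ^ (-e) * A ^ e := by
      rw [hAeBe, Real.rpow_neg ht0.le, ← mul_assoc, inv_mul_cancel₀ hte0.ne', one_mul]
    have hte : t ^ (-e) ≤ 2 ^ |e| := by
      have h := aux_rpow_le (c := 2) (x := -e) one_le_two ht_lo ht_hi
      rwa [abs_neg] at h
    have hgz_bd : B ^ e * ‖(g z)‖ ≤ 2 ^ |e| * M := by
      rw [hBeAe, mul_assoc]
      exact mul_le_mul hte hMz (mul_nonneg hAe0.le (norm_nonneg _))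
        (by positivity)
    have hte1 : |t ^ e - 1| ≤ K * (4 * R) := by
      calc |t ^ e - 1| ≤ (|e| * 2 ^ (|e| + 1)) * |t - 1| := aux_rpow_sub_one ht_lo ht_hi
        _ = K * |t - 1| := by rw [hK]
        _ ≤ K * (4 * R) := mul_le_mul_of_nonneg_left htm1 hK0
    -- Schwarz lemma part
    set δ : ℝ := (1 - ‖w‖)/2 with hδ
    clear_value δ
    have hδ0 : 0 < δ := by rw [hδ]; linarith
    have hball : Metric.ball w δ ⊆ Metric.ball (0:ℂ) 1 := by
      intro u hu
      simp only [Metric.mem_ball, Complex.dist_eq] at hu ⊢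
      have h3 : ‖u‖ ≤ ‖(u - w)‖ + ‖w‖ := by
        simpa using norm_add_le (u - w) w
      rw [sub_zero]
      rw [hδ] at hu
      linarith
    set N : ℝ := (4:ℝ) ^ |e| * M with hN
    clear_value N
    have hN0 : 0 < N := by rw [hN]; exact mul_pos (Real.rpow_pos_of_pos (by norm_num) _) hM1
    have hNB0 : 0 < N / B ^ e := div_pos hN0 hBe0
    have hgu_bd : ∀ u ∈ Metric.ball w δ, ‖(g u)‖ ≤ N / B ^ e := by
      intro u hu
      have hu1 : u ∈ Metric.ball (0:ℂ) 1 := hball hu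
      have hu2 : ‖u‖ < 1 := by simpa [Complex.dist_eq] using hu1
      have huw : ‖(u - w)‖ < δ := by
        simpa [Metric.mem_ball, Complex.dist_eq] using hu
      set Bu : ℝ := 1 - ‖u‖ ^ 2 with hBu
      clear_value Bu
      have hBu0 : 0 < Bu := by
        rw [hBu]
        have := mul_pos (show (0:ℝ) < 1 - ‖u‖ by linarith)
          (show (0:ℝ) < 1 + ‖u‖ by linarith [norm_nonneg u])
        linarith [this]
      have habsu : |‖u‖ - ‖w‖| ≤ ‖(u - w)‖ := by
        have h := abs_norm_sub_norm_le u w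
        exact h
      have habsu' := abs_lt.1 (lt_of_le_of_lt habsu huw)
      rw [hδ] at habsu'
      have hau_up : ‖u‖ < (1 + ‖w‖)/2 := by linarith [habsu'.2]
      have hau_lo : ‖w‖ - (1 - ‖w‖)/2 < ‖u‖ := by
        linarith [habsu'.1]
      have hr1 : B ≤ 4 * Bu := by
        rw [hB, hBu]
        have hp := mul_nonneg
          (show (0:ℝ) ≤ (1 + ‖w‖)/2 - ‖u‖ by linarith)
          (show (0:ℝ) ≤ (1 + ‖w‖)/2 + ‖u‖ by
            have := norm_nonneg u; have := norm_nonneg w; linarith)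
        linarith [hp, hw1]
      have hr2 : Bu ≤ 4 * B := by
        rw [hB, hBu]
        have hp1 := mul_nonneg (show (0:ℝ) ≤ 1 - ‖u‖ by linarith)
          (show (0:ℝ) ≤ 1 - ‖u‖ by linarith)
        have hp2 := mul_nonneg (show (0:ℝ) ≤ 1 - ‖w‖ by linarith)
          (norm_nonneg w)
        linarith [hp1, hp2, hau_lo]
      have hs : Bu ^ e * ‖(g u)‖ ≤ M := by
        have h := hM u hu1
        rwa [← hBu] at h
      have hsu : (Bu / B) ^ (-e) ≤ 4 ^ |e| := by
        have h14 : 1/(4:ℝ) ≤ Bu / B := by rw [le_div_iff₀ hB0]; linarith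
        have h41 : Bu / B ≤ 4 := by rw [div_le_iff₀ hB0]; linarith
        have h := aux_rpow_le (c := 4) (x := -e) (by norm_num) h14 h41
        rwa [abs_neg] at h
      have hBue0 : 0 < Bu ^ e := Real.rpow_pos_of_pos hBu0 e
      have hBe_eq : B ^ e = (Bu / B) ^ (-e) * Bu ^ e := by
        have h1 : (Bu / B) ^ (-e) = B ^ e / Bu ^ e := by
          rw [Real.rpow_neg (div_pos hBu0 hB0).le, Real.div_rpow hBu0.le hB0.le, inv_div]
        rw [h1]
        field_simp
      have hfin : B ^ e * ‖(g u)‖ ≤ N := by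
        rw [hBe_eq, mul_assoc, hN]
        exact mul_le_mul hsu hs (mul_nonneg hBue0.le (norm_nonneg _)) (by positivity)
      rw [le_div_iff₀ hBe0, mul_comm]
      exact hfin
    have hmaps : Set.MapsTo g (Metric.ball w δ) (Metric.ball (g w) (3 * (N / B ^ e))) := by
      intro u hu
      have h1 := hgu_bd u hu
      have h2 := hgu_bd w (Metric.mem_ball_self hδ0)
      rw [Metric.mem_ball, Complex.dist_eq]
      calc ‖(g u - g w)‖ ≤ ‖(g u)‖ + ‖(g w)‖ := by
            have := norm_sub_le (g u) (g w)
            exact this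
        _ ≤ 2 * (N / B ^ e) := by linarith
        _ < 3 * (N / B ^ e) := by linarith
    have hzball : z ∈ Metric.ball w δ := by
      rw [Metric.mem_ball, Complex.dist_eq, hδ]
      linarith [hzwd]
    have hdg := Complex.dist_le_div_mul_dist_of_mapsTo_ball (hg.mono hball) (hmaps.mono_right Metric.ball_subset_closedBall) hzball
    have hgzw : ‖(g z - g w)‖
        ≤ 3 * (N / B ^ e) / δ * ‖(z - w)‖ := by
      simpa [Complex.dist_eq] using hdg
    have hB4δ : B ≤ 4 * δ := by rw [hδ]; linarith [hB2d]
    have hterm2 : B ^ e * ‖(g z - g w)‖ ≤ 24 * N * R := by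
      have step : B ^ e * ‖(g z - g w)‖
          ≤ 3 * N / δ * ‖(z - w)‖ := by
        calc B ^ e * ‖(g z - g w)‖
            ≤ B ^ e * (3 * (N / B ^ e) / δ * ‖(z - w)‖) :=
              mul_le_mul_of_nonneg_left hgzw hBe0.le
          _ = 3 * N / δ * ‖(z - w)‖ := by
              field_simp
      calc B ^ e * ‖(g z - g w)‖ ≤ 3 * N / δ * ‖(z - w)‖ := step
        _ ≤ 3 * N / δ * (2 * R * B) := by
            exact mul_le_mul_of_nonneg_left hzwB
              (le_of_lt (div_pos (by linarith) hδ0))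
        _ ≤ 24 * N * R := by
            rw [div_mul_eq_mul_div, div_le_iff₀ hδ0]
            have hp := mul_nonneg (mul_nonneg hN0.le hR0)
              (show (0:ℝ) ≤ 4 * δ - B by linarith)
            linarith [hp]
    have hterm1 : |A ^ e - B ^ e| * ‖(g z)‖ ≤ 4 * K * 2 ^ |e| * (M * R) := by
      have h1 : |A ^ e - B ^ e| = B ^ e * |t ^ e - 1| := by
        rw [hAeBe, show t ^ e * B ^ e - B ^ e = B ^ e * (t ^ e - 1) from by ring,
          abs_mul, _root_.abs_of_nonneg hBe0.le]
      calc |A ^ e - B ^ e| * ‖(g z)‖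
          = |t ^ e - 1| * (B ^ e * ‖(g z)‖) := by rw [h1]; ring
        _ ≤ (K * (4 * R)) * (2 ^ |e| * M) :=
            mul_le_mul hte1 hgz_bd (mul_nonneg hBe0.le (norm_nonneg _))
              (mul_nonneg hK0 (by linarith))
        _ = 4 * K * 2 ^ |e| * (M * R) := by ring
    have hsplit : ‖(((A ^ e : ℝ) : ℂ) * g z - ((B ^ e : ℝ) : ℂ) * g w)‖
        ≤ |A ^ e - B ^ e| * ‖(g z)‖ + B ^ e * ‖(g z - g w)‖ := by
      have hid : ((A ^ e : ℝ) : ℂ) * g z - ((B ^ e : ℝ) : ℂ) * g w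
          = (((A ^ e - B ^ e : ℝ)) : ℂ) * g z + ((B ^ e : ℝ) : ℂ) * (g z - g w) := by
        push_cast; ring
      rw [hid]
      calc ‖((((A ^ e - B ^ e : ℝ)) : ℂ) * g z
            + ((B ^ e : ℝ) : ℂ) * (g z - g w))‖
          ≤ ‖((((A ^ e - B ^ e : ℝ)) : ℂ) * g z)‖
            + ‖(((B ^ e : ℝ) : ℂ) * (g z - g w))‖ := norm_add_le _ _
        _ = |A ^ e - B ^ e| * ‖(g z)‖ + B ^ e * ‖(g z - g w)‖ := by
            rw [norm_mul, norm_mul, Complex.norm_real, Real.norm_eq_abs, Complex.norm_real, Real.norm_eq_abs,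
              _root_.abs_of_nonneg hBe0.le]
    have hMR : 0 ≤ M * R := mul_nonneg hM0 hR0
    rw [hN] at hterm2
    linarith [hsplit, hterm1, hterm2, hMR]
  · -- large pseudo-hyperbolic distance
    push_neg at hcase
    have h2M : ‖(((A ^ e : ℝ) : ℂ) * g z - ((B ^ e : ℝ) : ℂ) * g w)‖ ≤ 2 * M := by
      calc ‖(((A ^ e : ℝ) : ℂ) * g z - ((B ^ e : ℝ) : ℂ) * g w)‖
          ≤ ‖(((A ^ e : ℝ) : ℂ) * g z)‖ + ‖(((B ^ e : ℝ) : ℂ) * g w)‖ := by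
            have := norm_sub_le (((A ^ e : ℝ) : ℂ) * g z) (((B ^ e : ℝ) : ℂ) * g w)
            exact this
        _ = A ^ e * ‖(g z)‖ + B ^ e * ‖(g w)‖ := by
            rw [norm_mul, norm_mul, Complex.norm_real, Real.norm_eq_abs, Complex.norm_real, Real.norm_eq_abs,
              _root_.abs_of_nonneg hAe0.le, _root_.abs_of_nonneg hBe0.le]
        _ ≤ 2 * M := by linarith [hMz, hMw]
    have hx1 : (0:ℝ) ≤ 4 * K * 2 ^ |e| := mul_nonneg (mul_nonneg (by norm_num) hK0) h2e.le
    have hx2 : (0:ℝ) ≤ 24 * 4 ^ |e| := by positivity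
    have hp : 0 < M * (R - 1/16) := mul_pos hM1 (by linarith)
    have hx1MR : 0 ≤ 4 * K * 2 ^ |e| * M * R := mul_nonneg (mul_nonneg hx1 hM0) hR0
    have hx2MR : 0 ≤ 24 * 4 ^ |e| * M * R := mul_nonneg (mul_nonneg hx2 hM0) hR0
    linarith [h2M, hp, hx1MR, hx2MR, hM1]
end
end

section
/- Let m ∈ ℕ, α > 0, v a bounded strictly positive continuous weight on D, u₁, u₂ holomorphic on D and φ₁, φ₂ holomorphic self-maps of D. If the difference operator T = D^m_{φ₁,u₁} − D^m_{φ₂,u₂}, defined by (Tf)(z) = u₁(z) f^{(m)}(φ₁(z)) − u₂(z) f^{(m)}(φ₂(z)), is bounded from B^α to H^∞_v, then sup_{n≥1} n^{α+m-1} ‖u₁ φ₁^n − u₂ φ₂^n‖_v < ∞, where ‖g‖_v = sup_{z∈D} v(z)|g(z)|. -/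
noncomputable section
open Complex

/-- The open unit disk in ℂ. -/
def UD : Set ℂ := Metric.ball 0 1

/-- Membership in the Bloch-type space B^α. -/
def InBloch (α : ℝ) (f : ℂ → ℂ) : Prop :=
  DifferentiableOn ℂ f UD ∧
    ∃ C, ∀ z ∈ UD, (1 - ‖z‖ ^ 2) ^ α * ‖deriv f z‖ ≤ C

/-- The Bloch-type norm ‖f‖_{B^α}. -/
def blochNorm (α : ℝ) (f : ℂ → ℂ) : ℝ :=
  ‖f 0‖ +
    sSup ((fun z => (1 - ‖z‖ ^ 2) ^ α * ‖deriv f z‖) '' UD)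

lemma itd_pow (N : ℕ) : ∀ m : ℕ, iteratedDeriv m (fun z : ℂ => z ^ N)
    = fun z => (N.descFactorial m : ℂ) * z ^ (N - m) := by
  intro m
  induction m with
  | zero => simp
  | succ m ih =>
    rw [iteratedDeriv_succ, ih]
    funext z
    rw [deriv_const_mul _ (differentiableAt_pow _), deriv_pow_field,
      Nat.descFactorial_succ, Nat.cast_mul]
    have : N - (m + 1) = N - m - 1 := by omega
    rw [this]; ring

lemma rpow_le_exp {α : ℝ} (hα : 0 < α) {s : ℝ} (hs : 0 < s) :
    s ^ α ≤ α ^ α * Real.exp s := by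
  rw [Real.rpow_def_of_pos hs, Real.rpow_def_of_pos hα, ← Real.exp_add]
  apply Real.exp_le_exp.2
  have h1 : Real.log (s / α) ≤ s / α - 1 := Real.log_le_sub_one_of_pos (by positivity)
  rw [Real.log_div hs.ne' hα.ne'] at h1
  have h2 := mul_le_mul_of_nonneg_right h1 hα.le
  rw [sub_mul, sub_mul, div_mul_cancel₀ _ hα.ne'] at h2
  linarith

lemma key_ineq {α : ℝ} (hα : 0 < α) {r : ℝ} (hr0 : 0 ≤ r) (hr1 : r < 1)
    {N : ℕ} (hN : 1 ≤ N) : (1 - r) ^ α * r ^ N ≤ (α / N) ^ α := by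
  have hNpos : (0:ℝ) < N := by exact_mod_cast hN
  have ht : 0 < 1 - r := by linarith
  have h1 : r ^ N ≤ Real.exp (-(N * (1 - r))) := by
    have : r ≤ Real.exp (-(1 - r)) := by
      have := Real.add_one_le_exp (-(1-r)); linarith
    calc r ^ N ≤ Real.exp (-(1-r)) ^ N := pow_le_pow_left₀ hr0 this N
      _ = Real.exp (-(N * (1-r))) := by rw [← Real.exp_nat_mul]; ring_nf
  have h2 : (1 - r) ^ α * Real.exp (-(N * (1 - r))) ≤ (α / N) ^ α := by
    have hs : 0 < (N:ℝ) * (1 - r) := by positivity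
    have h3 := rpow_le_exp hα hs
    rw [Real.mul_rpow hNpos.le ht.le] at h3
    rw [Real.div_rpow hα.le hNpos.le, le_div_iff₀ (Real.rpow_pos_of_pos hNpos α)]
    calc (1 - r) ^ α * Real.exp (-(N * (1 - r))) * (N:ℝ) ^ α
        = (N:ℝ) ^ α * (1-r) ^ α * Real.exp (-(N * (1 - r))) := by ring
      _ ≤ (α ^ α * Real.exp (N * (1-r))) * Real.exp (-(N * (1 - r))) := by
          apply mul_le_mul_of_nonneg_right h3 (Real.exp_nonneg _)
      _ = α ^ α := by rw [mul_assoc, ← Real.exp_add]; simp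
  calc (1 - r) ^ α * r ^ N ≤ (1 - r) ^ α * Real.exp (-(N * (1 - r))) := by
        apply mul_le_mul_of_nonneg_left h1 (Real.rpow_nonneg ht.le α)
    _ ≤ (α / N) ^ α := h2

lemma deriv_bound {α : ℝ} (hα : 0 < α) {N : ℕ} (hN : 1 ≤ N) {z : ℂ} (hz : z ∈ UD) :
    (1 - ‖z‖ ^ 2) ^ α * ‖deriv (fun w : ℂ => w ^ N) z‖
      ≤ ((4:ℝ) ^ α * α ^ α + 1) * (N:ℝ) ^ ((1:ℝ) - α) := by
  have hz1 : ‖z‖ < 1 := by simpa [UD] using hz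
  set r := ‖z‖ with hr
  have hr0 : 0 ≤ r := norm_nonneg z
  have hd : ‖deriv (fun w : ℂ => w ^ N) z‖ = N * r ^ (N - 1) := by
    rw [deriv_pow_field]
    rw [norm_mul, norm_pow, Complex.norm_natCast]
  rw [hd]
  have hr2 : 0 ≤ 1 - r ^ 2 := by nlinarith
  rcases eq_or_lt_of_le hN with h1 | h2
  · -- N = 1
    have hN1 : N = 1 := h1.symm
    subst hN1
    simp only [Nat.cast_one, Nat.sub_self, pow_zero, mul_one, Real.one_rpow]
    have : (1 - r ^ 2) ^ α ≤ 1 := Real.rpow_le_one hr2 (by nlinarith) hα.le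
    have h4 : (0:ℝ) ≤ (4:ℝ) ^ α * α ^ α := by positivity
    linarith
  · -- N ≥ 2
    have hN2 : 2 ≤ N := h2
    have hNpos : (0:ℝ) < N := by positivity
    have hN1pos : (1:ℕ) ≤ N - 1 := by omega
    have hcast : ((N - 1 : ℕ) : ℝ) = (N : ℝ) - 1 := by
      push_cast [Nat.cast_sub (by omega : 1 ≤ N)]; ring
    have hA : (1 - r ^ 2) ^ α ≤ (2:ℝ) ^ α * (1 - r) ^ α := by
      rw [← Real.mul_rpow (by norm_num) (by linarith)]
      exact Real.rpow_le_rpow hr2 (by nlinarith) hα.le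
    have hB : (1 - r) ^ α * r ^ (N - 1) ≤ (α / ((N - 1 : ℕ) : ℝ)) ^ α :=
      key_ineq hα hr0 hz1 hN1pos
    have hC : (α / ((N - 1 : ℕ) : ℝ)) ^ α ≤ (α / ((N:ℝ) / 2)) ^ α := by
      apply Real.rpow_le_rpow (by positivity)
      · apply div_le_div_of_nonneg_left hα.le (by positivity)
        rw [hcast]
        have : (2:ℝ) ≤ (N:ℝ) := by exact_mod_cast hN2
        linarith
      · exact hα.le
    have hD : (α / ((N:ℝ) / 2)) ^ α = (2:ℝ) ^ α * α ^ α / (N:ℝ) ^ α := by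
      have : α / ((N:ℝ) / 2) = 2 * α / (N:ℝ) := by field_simp
      rw [this, Real.div_rpow (by positivity) hNpos.le,
        Real.mul_rpow (by norm_num) hα.le]
    have h44 : (2:ℝ) ^ α * (2:ℝ) ^ α = (4:ℝ) ^ α := by
      rw [← Real.mul_rpow (by norm_num) (by norm_num)]; norm_num
    have hNN : (N:ℝ) / (N:ℝ) ^ α = (N:ℝ) ^ ((1:ℝ) - α) := by
      rw [Real.rpow_sub hNpos, Real.rpow_one]
    calc (1 - r ^ 2) ^ α * ((N:ℝ) * r ^ (N - 1))
        ≤ ((2:ℝ) ^ α * (1 - r) ^ α) * ((N:ℝ) * r ^ (N - 1)) := by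
          apply mul_le_mul_of_nonneg_right hA (by positivity)
      _ = ((2:ℝ) ^ α * (N:ℝ)) * ((1 - r) ^ α * r ^ (N - 1)) := by ring
      _ ≤ ((2:ℝ) ^ α * (N:ℝ)) * ((2:ℝ) ^ α * α ^ α / (N:ℝ) ^ α) := by
          apply mul_le_mul_of_nonneg_left ((hB.trans hC).trans_eq hD) (by positivity)
      _ = ((4:ℝ) ^ α * α ^ α) * ((N:ℝ) / (N:ℝ) ^ α) := by
          rw [← h44]; ring
      _ = ((4:ℝ) ^ α * α ^ α) * (N:ℝ) ^ ((1:ℝ) - α) := by rw [hNN]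
      _ ≤ ((4:ℝ) ^ α * α ^ α + 1) * (N:ℝ) ^ ((1:ℝ) - α) := by
          apply mul_le_mul_of_nonneg_right (by linarith) (Real.rpow_nonneg hNpos.le _)

lemma inBloch_pow {α : ℝ} (hα : 0 < α) {N : ℕ} (hN : 1 ≤ N) :
    InBloch α (fun w : ℂ => w ^ N) := by
  refine ⟨(differentiable_pow N).differentiableOn, ⟨_, fun z hz => deriv_bound hα hN hz⟩⟩

lemma bloch_pow {α : ℝ} (hα : 0 < α) {N : ℕ} (hN : 1 ≤ N) :
    blochNorm α (fun w : ℂ => w ^ N) ≤ ((4:ℝ) ^ α * α ^ α + 1) * (N:ℝ) ^ ((1:ℝ) - α) := by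
  unfold blochNorm
  have h0 : ‖(0:ℂ) ^ N‖ = 0 := by
    rw [zero_pow (by omega : N ≠ 0)]; simp
  rw [h0, zero_add]
  apply Real.sSup_le
  · rintro x ⟨z, hz, rfl⟩
    exact deriv_bound hα hN hz
  · exact mul_nonneg (by positivity) (Real.rpow_nonneg (Nat.cast_nonneg N) _)

lemma bloch_nonneg (α : ℝ) (f : ℂ → ℂ) : 0 ≤ blochNorm α f := by
  unfold blochNorm
  have h1 : (0:ℝ) ≤ sSup ((fun z => (1 - ‖z‖ ^ 2) ^ α * ‖deriv f z‖) '' UD) := by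
    apply Real.sSup_nonneg
    rintro x ⟨z, hz, rfl⟩
    have hz1 : ‖z‖ < 1 := by simpa [UD] using hz
    have h2 : (0:ℝ) ≤ 1 - ‖z‖ ^ 2 := by nlinarith [norm_nonneg z]
    exact mul_nonneg (Real.rpow_nonneg h2 α) (norm_nonneg _)
  positivity

/-- if T = D^m_{φ₁,u₁} − D^m_{φ₂,u₂} is bounded from B^α to H^∞_v, then
sup_{n≥1} n^{α+m-1}‖u₁φ₁^n − u₂φ₂^n‖_v < ∞. -/
theorem stmt10 (m : ℕ) (α : ℝ) (hα : 0 < α) (v : ℂ → ℝ)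
    (hv : ∀ z ∈ UD, 0 < v z) (hvb : ∃ M, ∀ z ∈ UD, v z ≤ M) (hvc : ContinuousOn v UD)
    (u₁ u₂ φ₁ φ₂ : ℂ → ℂ)
    (hu₁ : DifferentiableOn ℂ u₁ UD) (hu₂ : DifferentiableOn ℂ u₂ UD)
    (hφ₁ : DifferentiableOn ℂ φ₁ UD) (hφ₂ : DifferentiableOn ℂ φ₂ UD)
    (hφ₁D : ∀ z ∈ UD, φ₁ z ∈ UD) (hφ₂D : ∀ z ∈ UD, φ₂ z ∈ UD)
    (hbound : ∃ C, ∀ f : ℂ → ℂ, InBloch α f → ∀ z ∈ UD,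
      v z * ‖u₁ z * iteratedDeriv m f (φ₁ z) - u₂ z * iteratedDeriv m f (φ₂ z)‖ ≤
        C * blochNorm α f) :
    ∃ C', ∀ n : ℕ, 1 ≤ n → ∀ z ∈ UD,
      (n : ℝ) ^ (α + m - 1) * (v z * ‖u₁ z * φ₁ z ^ n - u₂ z * φ₂ z ^ n‖) ≤ C' := by
  obtain ⟨C, hC⟩ := hbound
  set K : ℝ := (4:ℝ) ^ α * α ^ α + 1 with hK
  have hK0 : 0 ≤ K := by positivity
  set C₀ : ℝ := max C 0 with hC₀
  have hC₀0 : 0 ≤ C₀ := le_max_right _ _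
  refine ⟨C₀ * K * (m + 1), ?_⟩
  intro n hn z hz
  set N : ℕ := n + m with hNdef
  have hN1 : 1 ≤ N := by omega
  have hf : InBloch α (fun w : ℂ => w ^ N) := inBloch_pow hα hN1
  have hb := hC _ hf z hz
  simp only [itd_pow N m] at hb
  have hNm : N - m = n := by omega
  rw [hNm] at hb
  set A : ℝ := ‖u₁ z * φ₁ z ^ n - u₂ z * φ₂ z ^ n‖ with hA
  have hA0 : 0 ≤ A := norm_nonneg _
  set c : ℝ := (N.descFactorial m : ℝ) with hc
  have hfac : u₁ z * ((N.descFactorial m : ℂ) * φ₁ z ^ n)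
      - u₂ z * ((N.descFactorial m : ℂ) * φ₂ z ^ n)
      = (N.descFactorial m : ℂ) * (u₁ z * φ₁ z ^ n - u₂ z * φ₂ z ^ n) := by ring
  rw [hfac, norm_mul, Complex.norm_natCast] at hb
  -- c ≥ n^m, hence positive
  have hcn : ((n:ℝ)) ^ m ≤ c := by
    have h1 : n ^ m ≤ N.descFactorial m := by
      calc n ^ m ≤ (n + 1) ^ m := Nat.pow_le_pow_left (by omega) m
        _ = (N + 1 - m) ^ m := by congr 1; omega
        _ ≤ N.descFactorial m := Nat.pow_sub_le_descFactorial N m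
    rw [hc]; exact_mod_cast h1
  have hnpos : (0:ℝ) < n := by exact_mod_cast hn
  have hcpos : (0:ℝ) < c := lt_of_lt_of_le (by positivity) hcn
  -- the operator bound, with C replaced by C₀
  have hbl : blochNorm α (fun w : ℂ => w ^ N) ≤ K * (N:ℝ) ^ ((1:ℝ) - α) :=
    bloch_pow hα hN1
  have hb2 : c * (v z * A) ≤ C₀ * (K * (N:ℝ) ^ ((1:ℝ) - α)) := by
    calc c * (v z * A) = v z * (c * A) := by ring
      _ ≤ C * blochNorm α (fun w : ℂ => w ^ N) := hb
      _ ≤ C₀ * blochNorm α (fun w : ℂ => w ^ N) :=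
          mul_le_mul_of_nonneg_right (le_max_left _ _) (bloch_nonneg _ _)
      _ ≤ C₀ * (K * (N:ℝ) ^ ((1:ℝ) - α)) := mul_le_mul_of_nonneg_left hbl hC₀0
  -- N^{1-α} ≤ (m+1) n^{1-α}
  have hNn : ((N:ℝ)) ^ ((1:ℝ) - α) ≤ (m + 1) * (n:ℝ) ^ ((1:ℝ) - α) := by
    have hnN : (n:ℝ) ≤ (N:ℝ) := by exact_mod_cast (by omega : n ≤ N)
    rcases le_or_gt α 1 with h1 | h1
    · have hNle : (N:ℝ) ≤ ((m:ℝ) + 1) * (n:ℝ) := by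
        have h2 : m ≤ m * n := Nat.le_mul_of_pos_right m (by omega)
        have h3 : N ≤ (m + 1) * n := by
          calc N = n + m := hNdef
            _ ≤ n + m * n := by omega
            _ = (m + 1) * n := by ring
        push_cast
        exact_mod_cast h3
      calc ((N:ℝ)) ^ ((1:ℝ) - α) ≤ (((m:ℝ) + 1) * (n:ℝ)) ^ ((1:ℝ) - α) :=
            Real.rpow_le_rpow (Nat.cast_nonneg N) hNle (by linarith)
        _ = ((m:ℝ) + 1) ^ ((1:ℝ) - α) * (n:ℝ) ^ ((1:ℝ) - α) :=
            Real.mul_rpow (by positivity) (Nat.cast_nonneg n)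
        _ ≤ ((m:ℝ) + 1) ^ (1:ℝ) * (n:ℝ) ^ ((1:ℝ) - α) := by
            apply mul_le_mul_of_nonneg_right _ (Real.rpow_nonneg (Nat.cast_nonneg n) _)
            exact Real.rpow_le_rpow_of_exponent_le (by linarith [Nat.cast_nonneg (α := ℝ) m]) (by linarith)
        _ = (m + 1) * (n:ℝ) ^ ((1:ℝ) - α) := by rw [Real.rpow_one]
    · calc ((N:ℝ)) ^ ((1:ℝ) - α) ≤ (n:ℝ) ^ ((1:ℝ) - α) :=
            Real.rpow_le_rpow_of_nonpos hnpos hnN (by linarith)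
        _ ≤ (m + 1) * (n:ℝ) ^ ((1:ℝ) - α) := by
            apply le_mul_of_one_le_left (Real.rpow_nonneg (Nat.cast_nonneg n) _)
            have : (0:ℝ) ≤ (m:ℝ) := Nat.cast_nonneg m
            linarith
  -- rpow arithmetic : n^{α+m-1} * n^{1-α} = n^m
  have hrm : (n:ℝ) ^ (α + m - 1) * (n:ℝ) ^ ((1:ℝ) - α) = (n:ℝ) ^ m := by
    rw [← Real.rpow_natCast (n:ℝ) m, ← Real.rpow_add hnpos]
    congr 1; ring
  have hrnn : 0 ≤ (n:ℝ) ^ (α + m - 1) := Real.rpow_nonneg hnpos.le _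
  -- final chain, multiplied through by c > 0
  rw [← mul_le_mul_iff_left₀ hcpos]
  calc (n:ℝ) ^ (α + m - 1) * (v z * A) * c
      = (n:ℝ) ^ (α + m - 1) * (c * (v z * A)) := by ring
    _ ≤ (n:ℝ) ^ (α + m - 1) * (C₀ * (K * (N:ℝ) ^ ((1:ℝ) - α))) :=
        mul_le_mul_of_nonneg_left hb2 hrnn
    _ = (C₀ * K) * ((n:ℝ) ^ (α + m - 1) * (N:ℝ) ^ ((1:ℝ) - α)) := by ring
    _ ≤ (C₀ * K) * ((n:ℝ) ^ (α + m - 1) * ((m + 1) * (n:ℝ) ^ ((1:ℝ) - α))) := by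
        apply mul_le_mul_of_nonneg_left _ (by positivity)
        exact mul_le_mul_of_nonneg_left hNn hrnn
    _ = (C₀ * K * (m + 1)) * ((n:ℝ) ^ (α + m - 1) * (n:ℝ) ^ ((1:ℝ) - α)) := by ring
    _ = (C₀ * K * (m + 1)) * (n:ℝ) ^ m := by rw [hrm]
    _ ≤ (C₀ * K * (m + 1)) * c := by
        apply mul_le_mul_of_nonneg_left hcn (by positivity)
end
end

section
/- Let m ∈ ℕ, α > 0, v a weight, u₁, u₂ ∈ H(D), φ₁, φ₂ holomorphic self-maps of D. For every z ∈ D, with f_{φ₁(z)} the test function satisfying f_a^{(m)}(w) = (1-|a|²)^α/(1-āw)^{2α+m-1}, one has ‖(D^m_{φ₁,u₁} − D^m_{φ₂,u₂}) f_{φ₁(z)}‖_v ≥ |T₁(z)| − [(1-|φ₁(z)|²)^α (1-|φ₂(z)|²)^{α+m-1} / |1-conj(φ₁(z))φ₂(z)|^{2α+m-1}] |T₂(z)|, where T_i(z) = v(z)u_i(z)/(1-|φ_i(z)|²)^{α+m-1}. -/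
noncomputable section
open Complex
open scoped ENNReal

/-- The weighted-type (possibly infinite) sup norm ‖g‖_v = sup_{z∈D} v(z)|g(z)|, in ℝ≥0∞. -/
def vNormE (v : ℂ → ℝ) (g : ℂ → ℂ) : ℝ≥0∞ :=
  ⨆ z ∈ UD, ENNReal.ofReal (v z * ‖g z‖)

/-- lower bound for ‖(D^m_{φ₁,u₁} − D^m_{φ₂,u₂}) f_{φ₁(z)}‖_v, where f_a is any
test function with f_a^{(m)}(w) = (1-|a|²)^α/(1-āw)^{2α+m-1}. -/
theorem stmt12 (m : ℕ) (α : ℝ) (hα : 0 < α) (v : ℂ → ℝ) (hv : ∀ z ∈ UD, 0 < v z)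
    (u₁ u₂ φ₁ φ₂ : ℂ → ℂ)
    (hφ₁D : ∀ w ∈ UD, φ₁ w ∈ UD) (hφ₂D : ∀ w ∈ UD, φ₂ w ∈ UD)
    (z : ℂ) (hz : z ∈ UD) (f : ℂ → ℂ)
    (hf : ∀ w ∈ UD, iteratedDeriv m f w =
      (((1 - ‖φ₁ z‖ ^ 2) ^ α : ℝ) : ℂ) /
        (1 - (starRingEnd ℂ) (φ₁ z) * w) ^ (((2 * α + m - 1 : ℝ)) : ℂ)) :
    ENNReal.ofReal
        (v z * ‖u₁ z‖ / (1 - ‖φ₁ z‖ ^ 2) ^ (α + m - 1) -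
          (1 - ‖φ₁ z‖ ^ 2) ^ α * (1 - ‖φ₂ z‖ ^ 2) ^ (α + m - 1) /
              ‖1 - (starRingEnd ℂ) (φ₁ z) * φ₂ z‖ ^ (2 * α + m - 1) *
            (v z * ‖u₂ z‖ / (1 - ‖φ₂ z‖ ^ 2) ^ (α + m - 1))) ≤
      vNormE v (fun w =>
        u₁ w * iteratedDeriv m f (φ₁ w) - u₂ w * iteratedDeriv m f (φ₂ w)) := by
  set a := φ₁ z with ha_def
  set b := φ₂ z with hb_def
  have haD : a ∈ UD := hφ₁D z hz
  have hbD : b ∈ UD := hφ₂D z hz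
  have ha : ‖a‖ < 1 := by simpa [UD] using haD
  have hb : ‖b‖ < 1 := by simpa [UD] using hbD
  have hX : (0:ℝ) < 1 - ‖a‖ ^ 2 := by nlinarith [norm_nonneg a]
  have hY : (0:ℝ) < 1 - ‖b‖ ^ 2 := by nlinarith [norm_nonneg b]
  have hZne : (1 : ℂ) - (starRingEnd ℂ) a * b ≠ 0 := by
    intro h
    have h2 : ‖(starRingEnd ℂ) a * b‖ < 1 := by
      rw [norm_mul, Complex.norm_conj]
      nlinarith [norm_nonneg a, norm_nonneg b]
    have h1 : (1:ℂ) = (starRingEnd ℂ) a * b := by linear_combination h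
    rw [← h1] at h2
    simp at h2
  have hZ : (0:ℝ) < ‖1 - (starRingEnd ℂ) a * b‖ :=
    norm_pos_iff.mpr hZne
  -- value of |f^{(m)}(a)|
  have hfa : ‖iteratedDeriv m f a‖
      = ((1 - ‖a‖ ^ 2) ^ (α + (m:ℝ) - 1))⁻¹ := by
    rw [hf a haD]
    have hca : (1 : ℂ) - (starRingEnd ℂ) a * a = ((1 - ‖a‖ ^ 2 : ℝ) : ℂ) := by
      rw [mul_comm, Complex.mul_conj, Complex.normSq_eq_norm_sq]
      push_cast
      ring
    rw [hca, norm_div, Complex.norm_real, Real.norm_eq_abs,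
      _root_.abs_of_nonneg (Real.rpow_nonneg hX.le α),
      Complex.norm_cpow_eq_rpow_re_of_pos hX, Complex.ofReal_re,
      ← Real.rpow_sub hX,
      show α - (2 * α + (m:ℝ) - 1) = -(α + (m:ℝ) - 1) by ring,
      Real.rpow_neg hX.le]
  -- value of |f^{(m)}(b)|
  have hfb : ‖iteratedDeriv m f b‖
      = (1 - ‖a‖ ^ 2) ^ α /
        ‖1 - (starRingEnd ℂ) a * b‖ ^ (2 * α + (m:ℝ) - 1) := by
    rw [hf b hbD, norm_div, Complex.norm_real, Real.norm_eq_abs,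
      _root_.abs_of_nonneg (Real.rpow_nonneg hX.le α), Complex.norm_cpow_real]
  -- pointwise lower bound at z
  have key : v z * ‖u₁ z‖ / (1 - ‖a‖ ^ 2) ^ (α + (m:ℝ) - 1) -
        (1 - ‖a‖ ^ 2) ^ α * (1 - ‖b‖ ^ 2) ^ (α + (m:ℝ) - 1) /
            ‖1 - (starRingEnd ℂ) a * b‖ ^ (2 * α + (m:ℝ) - 1) *
          (v z * ‖u₂ z‖ / (1 - ‖b‖ ^ 2) ^ (α + (m:ℝ) - 1)) ≤
      v z * ‖u₁ z * iteratedDeriv m f a - u₂ z * iteratedDeriv m f b‖ := by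
    have htri : ‖u₁ z * iteratedDeriv m f a‖ -
        ‖u₂ z * iteratedDeriv m f b‖ ≤
        ‖u₁ z * iteratedDeriv m f a - u₂ z * iteratedDeriv m f b‖ := by
      simpa using
        norm_sub_norm_le (u₁ z * iteratedDeriv m f a) (u₂ z * iteratedDeriv m f b)
    have hvz : 0 < v z := hv z hz
    have h1 : v z * ‖u₁ z‖ / (1 - ‖a‖ ^ 2) ^ (α + (m:ℝ) - 1)
        = v z * ‖u₁ z * iteratedDeriv m f a‖ := by
      rw [norm_mul, hfa]; ring
    have h2 : (1 - ‖a‖ ^ 2) ^ α * (1 - ‖b‖ ^ 2) ^ (α + (m:ℝ) - 1) /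
            ‖1 - (starRingEnd ℂ) a * b‖ ^ (2 * α + (m:ℝ) - 1) *
          (v z * ‖u₂ z‖ / (1 - ‖b‖ ^ 2) ^ (α + (m:ℝ) - 1))
        = v z * ‖u₂ z * iteratedDeriv m f b‖ := by
      rw [norm_mul, hfb]
      have hYne : (1 - ‖b‖ ^ 2) ^ (α + (m:ℝ) - 1) ≠ 0 :=
        (Real.rpow_pos_of_pos hY _).ne'
      field_simp
    rw [h1, h2]
    calc v z * ‖u₁ z * iteratedDeriv m f a‖ -
          v z * ‖u₂ z * iteratedDeriv m f b‖
        = v z * (‖u₁ z * iteratedDeriv m f a‖ -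
            ‖u₂ z * iteratedDeriv m f b‖) := by ring
      _ ≤ v z * ‖u₁ z * iteratedDeriv m f a - u₂ z * iteratedDeriv m f b‖ :=
          mul_le_mul_of_nonneg_left htri hvz.le
  refine le_trans (ENNReal.ofReal_le_ofReal key) ?_
  exact le_iSup₂ (f := fun w (_ : w ∈ UD) => ENNReal.ofReal
    (v w * ‖u₁ w * iteratedDeriv m f (φ₁ w) - u₂ w * iteratedDeriv m f (φ₂ w)‖))
    z hz
end
end

section
/- Let m ∈ ℕ, α > 0, v a weight, u₁, u₂ ∈ H(D), φ₁, φ₂ holomorphic self-maps of D. For every z ∈ D, with g_{φ₁(z)} the test function with g_a^{(m)}(w) = (1-|a|²)^α (a-w)/((1-āw)^{2α+m}), one has ‖(D^m_{φ₁,u₁} − D^m_{φ₂,u₂}) g_{φ₁(z)}‖_v ≥ [(1-|φ₁(z)|²)^α (1-|φ₂(z)|²)^{α+m-1} / |1-conj(φ₁(z))φ₂(z)|^{2α+m-1}] · |T₂(z)| · ρ(z), where T₂(z) = v(z)u₂(z)/(1-|φ₂(z)|²)^{α+m-1} and ρ(z) = |(φ₁(z)-φ₂(z))/(1-conj(φ₂(z))φ₁(z))|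 is the pseudo-hyperbolic distance of φ₁(z) and φ₂(z). -/
noncomputable section
open Complex
open scoped ENNReal

/-- lower bound for ‖(D^m_{φ₁,u₁} − D^m_{φ₂,u₂}) g_{φ₁(z)}‖_v, where g_a is any
test function with g_a^{(m)}(w) = (1-|a|²)^α (a-w)/(1-āw)^{2α+m}. -/
theorem stmt13 (m : ℕ) (α : ℝ) (hα : 0 < α) (v : ℂ → ℝ) (hv : ∀ z ∈ UD, 0 < v z)
    (u₁ u₂ φ₁ φ₂ : ℂ → ℂ)
    (hφ₁D : ∀ w ∈ UD, φ₁ w ∈ UD) (hφ₂D : ∀ w ∈ UD, φ₂ w ∈ UD)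
    (z : ℂ) (hz : z ∈ UD) (g : ℂ → ℂ)
    (hg : ∀ w ∈ UD, iteratedDeriv m g w =
      (((1 - ‖φ₁ z‖ ^ 2) ^ α : ℝ) : ℂ) * (φ₁ z - w) /
        (1 - (starRingEnd ℂ) (φ₁ z) * w) ^ (((2 * α + m : ℝ)) : ℂ)) :
    ENNReal.ofReal
        ((1 - ‖φ₁ z‖ ^ 2) ^ α * (1 - ‖φ₂ z‖ ^ 2) ^ (α + m - 1) /
            ‖1 - (starRingEnd ℂ) (φ₁ z) * φ₂ z‖ ^ (2 * α + m - 1) *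
          (v z * ‖u₂ z‖ / (1 - ‖φ₂ z‖ ^ 2) ^ (α + m - 1)) *
          ‖(φ₁ z - φ₂ z) / (1 - (starRingEnd ℂ) (φ₂ z) * φ₁ z)‖) ≤
      vNormE v (fun w =>
        u₁ w * iteratedDeriv m g (φ₁ w) - u₂ w * iteratedDeriv m g (φ₂ w)) := by
  have ha : φ₁ z ∈ UD := hφ₁D z hz
  have hb : φ₂ z ∈ UD := hφ₂D z hz
  set a := φ₁ z
  set b := φ₂ z
  have haU : ‖a‖ < 1 := by
    simpa [UD, Complex.norm_def] using (mem_ball_zero_iff.mp ha)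
  have hbU : ‖b‖ < 1 := by
    simpa [UD, Complex.norm_def] using (mem_ball_zero_iff.mp hb)
  have hA : (0:ℝ) < 1 - ‖a‖ ^ 2 := by nlinarith [norm_nonneg a]
  have hB : (0:ℝ) < 1 - ‖b‖ ^ 2 := by nlinarith [norm_nonneg b]
  have hC : (0:ℝ) < ‖1 - (starRingEnd ℂ) a * b‖ := by
    have h1 : ‖(starRingEnd ℂ) a * b‖ < 1 := by
      rw [norm_mul, Complex.norm_conj]
      nlinarith [norm_nonneg a, norm_nonneg b]
    have h2 : (1:ℂ) - (starRingEnd ℂ) a * b ≠ 0 := by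
      intro h; rw [sub_eq_zero] at h; rw [← h] at h1; simp at h1
    exact norm_pos_iff.mpr h2
  -- |1 - conj b * a| = |1 - conj a * b|
  have hCC : ‖1 - (starRingEnd ℂ) b * a‖ = ‖1 - (starRingEnd ℂ) a * b‖ := by
    rw [← Complex.norm_conj (1 - (starRingEnd ℂ) b * a)]
    congr 1
    simp [map_sub, map_mul, mul_comm]
  -- value of iteratedDeriv at a is 0
  have hga : iteratedDeriv m g a = 0 := by
    rw [hg a ha]; simp
  have hgb : ‖iteratedDeriv m g b‖ =
      (1 - ‖a‖ ^ 2) ^ α * ‖a - b‖ /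
        ‖1 - (starRingEnd ℂ) a * b‖ ^ (2 * α + m) := by
    rw [hg b hb, norm_div, norm_mul, Complex.norm_real, Real.norm_eq_abs, Complex.norm_cpow_real,
      _root_.abs_of_nonneg (Real.rpow_nonneg hA.le α)]
  have key : (1 - ‖a‖ ^ 2) ^ α * (1 - ‖b‖ ^ 2) ^ (α + m - 1) /
            ‖1 - (starRingEnd ℂ) a * b‖ ^ (2 * α + m - 1) *
          (v z * ‖u₂ z‖ / (1 - ‖b‖ ^ 2) ^ (α + m - 1)) *
          ‖(a - b) / (1 - (starRingEnd ℂ) b * a)‖ =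
      v z * ‖u₁ z * iteratedDeriv m g a - u₂ z * iteratedDeriv m g b‖ := by
    rw [hga, norm_div, hCC]
    rw [show (2 * α + m : ℝ) = (2 * α + m - 1) + 1 by ring] at hgb
    rw [Real.rpow_add_one hC.ne'] at hgb
    have hBp : (1 - ‖b‖ ^ 2) ^ (α + m - 1) ≠ 0 := (Real.rpow_pos_of_pos hB _).ne'
    have hCp : ‖1 - (starRingEnd ℂ) a * b‖ ^ (2 * α + m - 1) ≠ 0 :=
      (Real.rpow_pos_of_pos hC _).ne'
    simp only [mul_zero, zero_sub, norm_neg, norm_mul, hgb]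
    field_simp
  rw [key]
  have : ENNReal.ofReal (v z * ‖
      (fun w => u₁ w * iteratedDeriv m g (φ₁ w) - u₂ w * iteratedDeriv m g (φ₂ w)) z‖) ≤
      vNormE v (fun w => u₁ w * iteratedDeriv m g (φ₁ w) - u₂ w * iteratedDeriv m g (φ₂ w)) :=
    le_iSup₂ (f := fun w (_ : w ∈ UD) => ENNReal.ofReal (v w * ‖
      (fun w => u₁ w * iteratedDeriv m g (φ₁ w) - u₂ w * iteratedDeriv m g (φ₂ w)) w‖)) z hz
  simpa using this
end
end
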